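/- Let Y : (ℕ → ℕ) → ℕ and let c : D → ℝ be the Specker net c(w) = ∑_{i<|w|} 2^{-Y(w(i))} on the directed set D of Y-injective finite lists, and suppose c converges to c∞. Then for every k ∈ ℕ: there exists f : ℕ → ℕ with Y(f) = k if and only if for every w ∈ D with |c(w) − c∞| < 2^{-k} there exists an entry g of w with Y(g) = k. -/

import Mathlib

def SpeckerD (Y : (ℕ → ℕ) → ℕ) : Set (List (ℕ → ℕ)) :=
  {w | ∀ i j (hi : i < w.length) (hj : j < w.length),
    Y (w.get ⟨i, hi⟩) = Y (w.get ⟨j, hj⟩) → i = j}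

def SpeckerLE (v w : List (ℕ → ℕ)) : Prop :=
  ∀ i (hi : i < v.length), ∃ j, ∃ hj : j < w.length, v.get ⟨i, hi⟩ = w.get ⟨j, hj⟩

noncomputable def SpeckerNet (Y : (ℕ → ℕ) → ℕ) (w : List (ℕ → ℕ)) : ℝ :=
  ∑ i : Fin w.length, (2 : ℝ) ^ (-(Y (w.get i) : ℤ))

lemma speckerD_iff_nodup (Y : (ℕ → ℕ) → ℕ) (w : List (ℕ → ℕ)) :
    w ∈ SpeckerD Y ↔ (w.map Y).Nodup := by
  rw [List.nodup_iff_injective_get]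
  constructor
  · rintro h ⟨i, hi⟩ ⟨j, hj⟩ hij
    simp only [List.get_eq_getElem, List.getElem_map] at hij
    simp only [List.length_map] at hi hj
    exact Fin.ext (h i j hi hj hij)
  · intro h i j hi hj hij
    have := h (a₁ := ⟨i, by simpa using hi⟩) (a₂ := ⟨j, by simpa using hj⟩)
      (by simpa [List.get_eq_getElem, List.getElem_map] using hij)
    exact congrArg Fin.val this

lemma speckerNet_eq (Y : (ℕ → ℕ) → ℕ) (w : List (ℕ → ℕ)) (hw : w ∈ SpeckerD Y) :
    SpeckerNet Y w = ∑ n ∈ (w.map Y).toFinset, (2 : ℝ) ^ (-(n : ℤ)) := by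
  rw [List.sum_toFinset _ ((speckerD_iff_nodup Y w).1 hw)]
  rw [SpeckerNet, ← Fin.sum_univ_fun_getElem (w.map Y) (fun n => (2 : ℝ) ^ (-(n : ℤ)))]
  apply Fintype.sum_equiv (finCongr (by simp : w.length = (w.map Y).length))
  intro i
  simp

lemma specker_le_cInf (Y : (ℕ → ℕ) → ℕ) (cInf : ℝ)
    (hconv : ∀ ε > (0 : ℝ), ∃ w₀ ∈ SpeckerD Y, ∀ w ∈ SpeckerD Y,
      SpeckerLE w₀ w → |SpeckerNet Y w - cInf| < ε)
    (v : List (ℕ → ℕ)) (hv : v ∈ SpeckerD Y) : SpeckerNet Y v ≤ cInf := by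
  refine le_of_forall_pos_le_add fun ε hε => ?_
  obtain ⟨w₀, hw₀, hcl⟩ := hconv ε hε
  set u : List (ℕ → ℕ) := w₀ ++ v.filter (fun g => decide (Y g ∉ w₀.map Y)) with hu
  have hmapu : u.map Y = w₀.map Y ++ (v.filter (fun g => decide (Y g ∉ w₀.map Y))).map Y := by
    simp [hu]
  have hnodup_u : (u.map Y).Nodup := by
    rw [hmapu, List.nodup_append]
    refine ⟨(speckerD_iff_nodup Y w₀).1 hw₀, ?_, ?_⟩
    · exact ((List.filter_sublist (l := v)).map Y).nodup ((speckerD_iff_nodup Y v).1 hv)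
    · intro n hn m hn' hnm
      rw [← hnm] at hn'
      obtain ⟨g, hg, rfl⟩ := List.mem_map.1 hn'
      have := (List.mem_filter.1 hg).2
      simp only [decide_eq_true_eq] at this
      exact this hn
  have hu_mem : u ∈ SpeckerD Y := (speckerD_iff_nodup Y u).2 hnodup_u
  have hle : SpeckerLE w₀ u := by
    intro i hi
    refine ⟨i, by simp [hu]; omega, ?_⟩
    exact (List.getElem_append_left hi).symm
  have hclose := hcl u hu_mem hle
  have huv : SpeckerNet Y v ≤ SpeckerNet Y u := by
    rw [speckerNet_eq Y v hv, speckerNet_eq Y u hu_mem]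
    refine Finset.sum_le_sum_of_subset_of_nonneg ?_ (fun n _ _ => by positivity)
    intro n hn
    rw [List.mem_toFinset] at hn ⊢
    rw [hmapu]
    by_cases h : n ∈ w₀.map Y
    · exact List.mem_append.2 (Or.inl h)
    · refine List.mem_append.2 (Or.inr ?_)
      obtain ⟨g, hg, rfl⟩ := List.mem_map.1 hn
      exact List.mem_map.2 ⟨g, List.mem_filter.2 ⟨hg, by simpa using h⟩, rfl⟩
  have : SpeckerNet Y u < cInf + ε := by
    have := abs_lt.1 hclose
    linarith [this.2]
  linarith

theorem specker_net_range_characterization (Y : (ℕ → ℕ) → ℕ) (cInf : ℝ)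
    (hmono : ∀ v ∈ SpeckerD Y, ∀ w ∈ SpeckerD Y, SpeckerLE v w →
      SpeckerNet Y v ≤ SpeckerNet Y w)
    (hconv : ∀ ε > (0 : ℝ), ∃ w₀ ∈ SpeckerD Y, ∀ w ∈ SpeckerD Y,
      SpeckerLE w₀ w → |SpeckerNet Y w - cInf| < ε) :
    ∀ k : ℕ, (∃ f : ℕ → ℕ, Y f = k) ↔
      (∀ w ∈ SpeckerD Y, |SpeckerNet Y w - cInf| < (2 : ℝ) ^ (-(k : ℤ)) →
        ∃ i, ∃ hi : i < w.length, Y (w.get ⟨i, hi⟩) = k) := by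
  intro k
  constructor
  · rintro ⟨f, hf⟩ w hw hclose
    by_contra hnk
    push_neg at hnk
    have hknot : k ∉ w.map Y := by
      intro hk
      obtain ⟨g, hg, hgk⟩ := List.mem_map.1 hk
      obtain ⟨⟨i, hi⟩, rfl⟩ := List.mem_iff_get.1 hg
      exact hnk i hi hgk
    set w' := w ++ [f] with hw'
    have hw'D : w' ∈ SpeckerD Y := by
      rw [speckerD_iff_nodup]
      have : w'.map Y = w.map Y ++ [k] := by simp [hw', hf]
      rw [this, List.nodup_append]
      exact ⟨(speckerD_iff_nodup Y w).1 hw, List.nodup_singleton k,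
        by intro n hn m hm hnm; simp at hm; rw [hnm, hm] at hn; exact hknot hn⟩
    have hsum : SpeckerNet Y w' = SpeckerNet Y w + (2 : ℝ) ^ (-(k : ℤ)) := by
      rw [speckerNet_eq Y w' hw'D, speckerNet_eq Y w hw]
      have hm : w'.map Y = w.map Y ++ [k] := by simp [hw', hf]
      have : (w'.map Y).toFinset = insert k (w.map Y).toFinset := by
        rw [hm]; ext n; simp [or_comm]
      rw [this, Finset.sum_insert (by simpa using hknot)]
      ring
    have h1 : SpeckerNet Y w' ≤ cInf := specker_le_cInf Y cInf hconv w' hw'D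
    have h2 := abs_lt.1 hclose
    linarith [h2.1, h2.2]
  · intro h
    obtain ⟨w₀, hw₀, hcl⟩ := hconv ((2 : ℝ) ^ (-(k : ℤ))) (by positivity)
    have hrefl : SpeckerLE w₀ w₀ := fun i hi => ⟨i, hi, rfl⟩
    obtain ⟨i, hi, hY⟩ := h w₀ hw₀ (hcl w₀ hw₀ hrefl)
    exact ⟨w₀.get ⟨i, hi⟩, hY⟩
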